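/- Let A be a bounded normal operator on a complex Hilbert space H, let α ∈ ρ(A) ∩ ℝ, and let L ⊆ H be a finite-dimensional subspace. Then (A − α)^{−1} is a bounded normal operator, (A − α)L is a subspace with dim((A − α)L) = dim(L), α ∉ Spec₂(A, L), and Spec₂((A − α)^{−1}, (A − α)L) = {(z − α)^{−1} : z ∈ Spec₂(A, L)}. -/

import Mathlib

open scoped InnerProductSpace ComplexConjugate Classical
open Complex ContinuousLinearMap

noncomputable section

variable {H : Type*} [NormedAddCommGroup H] [InnerProductSpace ℂ H] [CompleteSpace H]

/-- The second order spectrum of `B` relative to `L`. -/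
def Spec2 (B : H →L[ℂ] H) (L : Submodule ℂ H) : Set ℂ :=
  {z | ∃ φ ∈ L, φ ≠ 0 ∧ ∀ ψ ∈ L, ⟪(B - z • 1) φ, (B - (conj z) • 1) ψ⟫_ℂ = 0}

/-- Section 6: for `α ∈ ρ(A) ∩ ℝ`, the operator `(A − α)⁻¹` is a bounded normal operator,
`(A − α)L` has the same dimension as `L`, `α ∉ Spec₂(A, L)`, and
`Spec₂((A − α)⁻¹, (A − α)L) = {(z − α)⁻¹ : z ∈ Spec₂(A, L)}`. -/
theorem stmt19 (A : H →L[ℂ] H) (hA : IsStarNormal A) (α : ℝ)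
    (hα : (α : ℂ) ∉ spectrum ℂ A)
    (L : Submodule ℂ H) [FiniteDimensional ℂ ↥L] :
    IsStarNormal (Ring.inverse (A - (α : ℂ) • 1)) ∧
    Module.finrank ℂ ↥(Submodule.map ((A - (α : ℂ) • 1 : H →L[ℂ] H) : H →ₗ[ℂ] H) L) = Module.finrank ℂ ↥L ∧
    (α : ℂ) ∉ Spec2 A L ∧
    Spec2 (Ring.inverse (A - (α : ℂ) • 1)) (Submodule.map ((A - (α : ℂ) • 1 : H →L[ℂ] H) : H →ₗ[ℂ] H) L) =
      (fun z : ℂ => (z - (α : ℂ))⁻¹) '' Spec2 A L := by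
  set T := A - (α : ℂ) • 1 with hTdef
  -- T is a unit
  have hT : IsUnit T := by
    have h0 := spectrum.notMem_iff.mp hα
    have h2 : (algebraMap ℂ (H →L[ℂ] H)) (α:ℂ) - A = -T := by
      rw [hTdef, Algebra.algebraMap_eq_smul_one]; abel
    rw [h2] at h0
    exact (IsUnit.neg_iff _).mp h0
  have hleft : ∀ x : H, Ring.inverse T (T x) = x := by
    intro x
    rw [← ContinuousLinearMap.mul_apply, Ring.inverse_mul_cancel _ hT,
      ContinuousLinearMap.one_apply]
  have hinj : Function.Injective ⇑T := Function.LeftInverse.injective hleft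
  -- Part 1 : normality
  have hstarT : star T = star A - (α:ℂ) • 1 := by
    rw [hTdef]; simp [star_smul, Complex.conj_ofReal]
  have hTn : IsStarNormal T := by
    constructor
    rw [hstarT, hTdef]
    have hc : Commute (star A) A := hA.star_comm_self
    have h1 : Commute ((α:ℂ) • (1 : H →L[ℂ] H)) A := (Commute.one_left A).smul_left _
    have h2 : Commute (star A) ((α:ℂ) • (1 : H →L[ℂ] H)) := (Commute.one_right _).smul_right _
    have h3 : Commute ((α:ℂ) • (1 : H →L[ℂ] H)) ((α:ℂ) • (1 : H →L[ℂ] H)) := Commute.refl _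
    exact (hc.sub_left h1).sub_right (h2.sub_left h3)
  have part1 : IsStarNormal (Ring.inverse T) := by
    constructor
    rw [← Ring.inverse_star]
    have hT' := isUnit_star.mpr hT
    obtain ⟨u, hu⟩ := hT
    obtain ⟨v, hv⟩ := hT'
    rw [← hu] at hv ⊢
    rw [← hv, Ring.inverse_unit, Ring.inverse_unit]
    have : Commute (↑v : H →L[ℂ] H) ↑u := by rw [hu] at hv ⊢; rw [hv]; exact hTn.star_comm_self
    exact (Commute.units_inv_left (Commute.units_inv_right this))
  -- Part 2 : dimension
  have part2 : Module.finrank ℂ ↥(Submodule.map (T : H →ₗ[ℂ] H) L) = Module.finrank ℂ ↥L :=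
    (Submodule.equivMapOfInjective (T : H →ₗ[ℂ] H) hinj L).finrank_eq.symm
  -- Part 3
  have part3 : (α : ℂ) ∉ Spec2 A L := by
    rintro ⟨φ, hφL, hφ0, h⟩
    have h1 := h φ hφL
    rw [Complex.conj_ofReal] at h1
    have h2 : T φ = 0 := inner_self_eq_zero.mp h1
    exact hφ0 (hinj (h2.trans (map_zero T).symm))
  refine ⟨part1, part2, part3, ?_⟩
  -- key identity
  have key : ∀ z : ℂ, z ≠ (α:ℂ) → ∀ φ : H,
      (Ring.inverse T - (z - (α:ℂ))⁻¹ • 1) (T φ)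
        = (-(z - (α:ℂ))⁻¹) • ((A - z • 1) φ) := by
    intro z hz φ
    have hz' : z - (α:ℂ) ≠ 0 := sub_ne_zero.mpr hz
    have hTφ : T φ = A φ - (α:ℂ) • φ := by rw [hTdef]; simp
    rw [ContinuousLinearMap.sub_apply, ContinuousLinearMap.smul_apply,
      ContinuousLinearMap.one_apply, hleft φ, hTφ, ContinuousLinearMap.sub_apply,
      ContinuousLinearMap.smul_apply, ContinuousLinearMap.one_apply]
    apply smul_right_injective H hz'
    match_scalars <;> field_simp <;> ring
  have hconj : ∀ z : ℂ, conj ((z - (α:ℂ))⁻¹) = ((conj z) - (α:ℂ))⁻¹ := by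
    intro z; rw [map_inv₀, map_sub, Complex.conj_ofReal]
  have hconjne : ∀ z : ℂ, z ≠ (α:ℂ) → conj z ≠ (α:ℂ) := by
    intro z hz h
    apply hz
    have := congrArg conj h
    rwa [Complex.conj_conj, Complex.conj_ofReal] at this
  ext w
  simp only [Set.mem_image]
  constructor
  · rintro ⟨φ', hmem, hφ'0, h⟩
    obtain ⟨φ, hφL, rfl⟩ := hmem
    have hw : w ≠ 0 := by
      rintro rfl
      have h1 := h (T φ) (Submodule.mem_map_of_mem hφL)
      simp only [map_zero, zero_smul, sub_zero, ContinuousLinearMap.coe_coe, hleft φ] at h1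
      exact hφ'0 (by rw [inner_self_eq_zero.mp h1, map_zero])
    set z := (α:ℂ) + w⁻¹ with hzdef
    have hz : z ≠ (α:ℂ) := by
      simp [hzdef, inv_ne_zero hw]
    have hwz : (z - (α:ℂ))⁻¹ = w := by
      rw [hzdef]; simp [inv_inv]
    refine ⟨z, ⟨φ, hφL, fun h0 => hφ'0 (by rw [h0, map_zero]), ?_⟩, hwz⟩
    intro ψ hψ
    have h1 := h (T ψ) (Submodule.mem_map_of_mem hψ)
    rw [← hwz] at h1
    rw [hconj z, ContinuousLinearMap.coe_coe, key z hz φ, key (conj z) (hconjne z hz) ψ,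
      inner_smul_left, inner_smul_right] at h1
    have hxne : -(z - (α:ℂ))⁻¹ ≠ 0 := neg_ne_zero.mpr (inv_ne_zero (sub_ne_zero.mpr hz))
    have hc1 : conj (-(z - (α:ℂ))⁻¹) ≠ 0 := fun h0 => hxne (by simpa using congrArg conj h0)
    have hc2 : (-(conj z - (α:ℂ))⁻¹) ≠ 0 :=
      neg_ne_zero.mpr (inv_ne_zero (sub_ne_zero.mpr (hconjne z hz)))
    rcases mul_eq_zero.mp h1 with h2 | h2
    · exact absurd h2 hc1
    rcases mul_eq_zero.mp h2 with h3 | h3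
    · exact absurd h3 hc2
    exact h3
  · rintro ⟨z, ⟨φ, hφL, hφ0, h⟩, rfl⟩
    have hz : z ≠ (α:ℂ) := by
      rintro rfl
      exact part3 ⟨φ, hφL, hφ0, h⟩
    refine ⟨T φ, Submodule.mem_map_of_mem hφL,
      fun h0 => hφ0 (hinj (h0.trans (map_zero T).symm)), ?_⟩
    rintro _ ⟨ψ, hψL, rfl⟩
    rw [hconj, ContinuousLinearMap.coe_coe, key z hz φ, key (conj z) (hconjne z hz) ψ,
      inner_smul_left, inner_smul_right, h ψ hψL, mul_zero, mul_zero]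


end
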